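/- The family (f_{m,n})_{m ∈ ℤ, n ∈ ℕ} is orthonormal in L²(ℝ²; ℂ): for all m, m' ∈ ℤ and n, n' ∈ ℕ, ∫_{ℝ²} conj(f_{m,n}(z)) f_{m',n'}(z) dz = 1 if (m,n) = (m',n') and = 0 otherwise. -/

import Mathlib

open MeasureTheory

/-- Generalized Laguerre polynomial
`L_n^α(x) = Σ_{k=0}^n (-1)^k binom(n+α, n-k) x^k / k!`, where
`binom(n+α, n-k) = Γ(n+α+1)/(Γ(α+k+1)·(n-k)!)`. -/
noncomputable def laguerre (α : ℝ) (n : ℕ) (x : ℝ) : ℝ :=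
  ∑ k ∈ Finset.range (n + 1),
    (-1 : ℝ) ^ k *
      (Real.Gamma ((n : ℝ) + α + 1) /
        (Real.Gamma (α + (k : ℝ) + 1) * (Nat.factorial (n - k) : ℝ))) *
      x ^ k / (Nat.factorial k : ℝ)

/-- The eigenfunctions `f_{m,n}` of the free Weyl operator with homogeneous
magnetic field, identifying `ℝ²` with `ℂ`. -/
noncomputable def fmn (m : ℤ) (n : ℕ) (z : ℂ) : ℂ :=
  (Real.sqrt ((Nat.factorial n : ℝ) / (Real.pi * (Nat.factorial (n + m.natAbs) : ℝ))) : ℂ) *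
    (Real.exp (-(‖z‖) ^ 2 / 2) : ℂ) *
    (if 0 ≤ m then z ^ m.natAbs else (starRingEnd ℂ z) ^ m.natAbs) *
    ((laguerre (m.natAbs : ℝ) n ((‖z‖) ^ 2) : ℝ) : ℂ)

lemma laguerre_eq (a n : ℕ) (x : ℝ) : laguerre a n x
    = ∑ j ∈ Finset.range (n + 1),
        (-1 : ℝ) ^ j * ((n + a).factorial / ((a + j).factorial * (n - j).factorial))
          * x ^ j / j.factorial := by
  unfold laguerre
  refine Finset.sum_congr rfl fun j _ => ?_
  rw [show (n : ℝ) + a + 1 = ((n + a : ℕ) : ℝ) + 1 by push_cast; ring,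
    Real.Gamma_nat_eq_factorial,
    show (a : ℝ) + j + 1 = ((a + j : ℕ) : ℝ) + 1 by push_cast; ring,
    Real.Gamma_nat_eq_factorial]

lemma pow_exp_laguerre_eq (a n b : ℕ) : ∀ x : ℝ,
    x ^ b * Real.exp (-x) * laguerre a n x
    = ∑ j ∈ Finset.range (n + 1),
        ((-1 : ℝ) ^ j * ((n + a).factorial / ((a + j).factorial * (n - j).factorial))
          / j.factorial) * (x ^ (b + j) * Real.exp (-x)) := by
  intro x
  rw [laguerre_eq, Finset.mul_sum]
  refine Finset.sum_congr rfl fun j _ => ?_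
  rw [pow_add]
  ring


lemma choose_alt_sum (n : ℕ) : ∀ x k : ℕ,
    ∑ j ∈ Finset.range (n + 1), (-1 : ℤ) ^ j * (n.choose j) * ((x + j).choose k)
      = if n ≤ k then (-1 : ℤ) ^ n * (x.choose (k - n)) else 0 := by
  induction n with
  | zero => intro x k; simp
  | succ n ih =>
    intro x k
    rw [Finset.sum_range_succ' _ (n + 1)]
    have h1 : ∀ i ∈ Finset.range (n + 1),
        (-1 : ℤ) ^ (i + 1) * ((n + 1).choose (i + 1)) * ((x + (i + 1)).choose k)
          = (-1 : ℤ) ^ (i + 1) * (n.choose (i + 1)) * ((x + (i + 1)).choose k)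
            + (-1) * ((-1 : ℤ) ^ i * (n.choose i) * ((x + 1 + i).choose k)) := by
      intro i _
      rw [Nat.choose_succ_succ n i, show x + (i + 1) = x + 1 + i by ring]
      push_cast
      ring
    rw [Finset.sum_congr rfl h1, Finset.sum_add_distrib, ← Finset.mul_sum, ih (x + 1) k]
    have h2 : (∑ i ∈ Finset.range (n + 1),
        (-1 : ℤ) ^ (i + 1) * (n.choose (i + 1)) * ((x + (i + 1)).choose k))
        = (if n ≤ k then (-1 : ℤ) ^ n * (x.choose (k - n)) else 0) - (x.choose k) := by
      have e1 := Finset.sum_range_succ'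
        (fun j => (-1 : ℤ) ^ j * (n.choose j) * ((x + j).choose k)) (n + 1)
      have e2 := Finset.sum_range_succ
        (fun j => (-1 : ℤ) ^ j * (n.choose j) * ((x + j).choose k)) (n + 1)
      rw [ih x k] at e2
      simp only [Nat.choose_succ_self, Nat.cast_zero, mul_zero, zero_mul, add_zero,
        pow_zero, Nat.choose_zero_right, Nat.cast_one, one_mul, Nat.add_zero] at e1 e2
      rw [e2] at e1
      linarith
    rw [h2]
    simp only [pow_zero, Nat.choose_zero_right, Nat.cast_one, one_mul, Nat.add_zero]
    rcases lt_trichotomy k n with hk | hk | hk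
    · rw [if_neg (by omega), if_neg (by omega), if_neg (by omega)]
      ring
    · subst hk
      rw [if_pos le_rfl, if_pos le_rfl, if_neg (by omega)]
      simp
      ring
    · rw [if_pos (by omega), if_pos (by omega), if_pos (by omega)]
      have e1 : k - n = (k - (n + 1)) + 1 := by omega
      rw [show (x + 1).choose (k - n) = x.choose (k - (n + 1)) + x.choose (k - n) by
        rw [e1, Nat.choose_succ_succ]]
      push_cast
      ring

lemma integrableOn_pow_mul_exp_neg (m : ℕ) :
    IntegrableOn (fun x : ℝ => x ^ m * Real.exp (-x)) (Set.Ioi 0) := by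
  have h := Real.GammaIntegral_convergent (s := (m : ℝ) + 1) (by positivity)
  refine h.congr_fun (fun x _ => ?_) measurableSet_Ioi
  dsimp only
  rw [add_sub_cancel_right, show ((m : ℝ)) = ((m : ℕ) : ℝ) by norm_num,
    Real.rpow_natCast, mul_comm]

lemma integral_pow_mul_exp_neg (m : ℕ) :
    ∫ x in Set.Ioi 0, x ^ m * Real.exp (-x) = (Nat.factorial m : ℝ) := by
  have h := Real.Gamma_eq_integral (s := (m : ℝ) + 1) (by positivity)
  rw [Real.Gamma_nat_eq_factorial] at h
  rw [h]
  refine setIntegral_congr_fun measurableSet_Ioi (fun x _ => ?_)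
  rw [add_sub_cancel_right, show ((m : ℝ)) = ((m : ℕ) : ℝ) by norm_num,
    Real.rpow_natCast, mul_comm]

lemma integrableOn_pow_exp_laguerre (a n b : ℕ) :
    IntegrableOn (fun x : ℝ => x ^ b * Real.exp (-x) * laguerre a n x) (Set.Ioi 0) := by
  rw [funext (pow_exp_laguerre_eq a n b)]
  apply integrable_finset_sum
  intro j _
  exact (integrableOn_pow_mul_exp_neg (b + j)).const_mul _

lemma laguerre_moment (a n k : ℕ) :
    ∫ x in Set.Ioi 0, x ^ (a + k) * Real.exp (-x) * laguerre a n x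
    = if n ≤ k then (-1 : ℝ) ^ n * (n + a).factorial * k.factorial / n.factorial
        * ((a + k).choose (k - n)) else 0 := by
  rw [setIntegral_congr_fun measurableSet_Ioi (fun x _ => pow_exp_laguerre_eq a n (a + k) x),
    integral_finset_sum _
      (fun j _ => ((integrableOn_pow_mul_exp_neg ((a + k) + j)).const_mul _))]
  simp_rw [integral_const_mul, integral_pow_mul_exp_neg]
  have key : ∀ j ∈ Finset.range (n + 1),
      ((-1 : ℝ) ^ j * ((n + a).factorial / ((a + j).factorial * (n - j).factorial))
        / j.factorial) * ((a + k + j).factorial : ℝ)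
      = ((n + a).factorial * k.factorial / n.factorial : ℝ)
        * ((((-1 : ℤ) ^ j * (n.choose j) * ((a + k + j).choose k) : ℤ)) : ℝ) := by
    intro j hj
    have hj' : j ≤ n := by simpa [Nat.lt_succ_iff] using hj
    have c1 : ((n.choose j : ℤ) : ℝ) = (n.factorial : ℝ) / (j.factorial * (n - j).factorial) := by
      push_cast
      exact Nat.cast_choose ℝ hj'
    have c2 : (((a + k + j).choose k : ℤ) : ℝ)
        = ((a + k + j).factorial : ℝ) / (k.factorial * (a + j).factorial) := by
      push_cast
      rw [Nat.cast_choose ℝ (by omega : k ≤ a + k + j), show a + k + j - k = a + j from by omega]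
    push_cast [c1, c2]
    have f1 : (j.factorial : ℝ) ≠ 0 := by positivity
    have f2 : ((n - j).factorial : ℝ) ≠ 0 := by positivity
    have f3 : ((a + j).factorial : ℝ) ≠ 0 := by positivity
    have f4 : (n.factorial : ℝ) ≠ 0 := by positivity
    have f5 : (k.factorial : ℝ) ≠ 0 := by positivity
    field_simp
  rw [Finset.sum_congr rfl key, ← Finset.mul_sum, ← Int.cast_sum,
    choose_alt_sum n (a + k) k]
  by_cases h : n ≤ k
  · rw [if_pos h, if_pos h]
    push_cast
    ring
  · rw [if_neg h, if_neg h]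
    simp

lemma laguerre_ortho (a n n' : ℕ) :
    ∫ x in Set.Ioi 0, x ^ a * Real.exp (-x) * (laguerre a n x * laguerre a n' x)
    = if n = n' then ((n + a).factorial : ℝ) / n.factorial else 0 := by
  have hint : ∀ x : ℝ, x ^ a * Real.exp (-x) * (laguerre a n x * laguerre a n' x)
      = ∑ k ∈ Finset.range (n' + 1),
          ((-1 : ℝ) ^ k * ((n' + a).factorial / ((a + k).factorial * (n' - k).factorial))
            / k.factorial) * (x ^ (a + k) * Real.exp (-x) * laguerre a n x) := by
    intro x
    have h : (x ^ a * Real.exp (-x) * laguerre a n' x) * laguerre a n x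
        = ∑ k ∈ Finset.range (n' + 1),
          ((-1 : ℝ) ^ k * ((n' + a).factorial / ((a + k).factorial * (n' - k).factorial))
            / k.factorial) * (x ^ (a + k) * Real.exp (-x)) * laguerre a n x := by
      rw [pow_exp_laguerre_eq a n' a x, Finset.sum_mul]
    calc x ^ a * Real.exp (-x) * (laguerre a n x * laguerre a n' x)
        = (x ^ a * Real.exp (-x) * laguerre a n' x) * laguerre a n x := by ring
      _ = _ := by rw [h]; exact Finset.sum_congr rfl fun k _ => by ring
  rw [setIntegral_congr_fun measurableSet_Ioi (fun x _ => hint x),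
    integral_finset_sum _
      (fun k _ => ((integrableOn_pow_exp_laguerre a n (a + k)).const_mul _))]
  simp_rw [integral_const_mul, laguerre_moment, mul_ite, mul_zero]
  rw [Finset.sum_ite, Finset.sum_const_zero, add_zero]
  have hfil : Finset.filter (fun k => n ≤ k) (Finset.range (n' + 1)) = Finset.Ico n (n' + 1) := by
    ext k
    simp [Nat.lt_succ_iff]
    omega
  rw [hfil, Finset.sum_Ico_eq_sum_range]
  by_cases hnn : n ≤ n'
  · have hr : n' + 1 - n = (n' - n) + 1 := by omega
    rw [hr]
    have key : ∀ i ∈ Finset.range ((n' - n) + 1),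
        ((-1 : ℝ) ^ (n + i) * ((n' + a).factorial
            / ((a + (n + i)).factorial * (n' - (n + i)).factorial)) / (n + i).factorial)
          * ((-1 : ℝ) ^ n * (n + a).factorial * (n + i).factorial / n.factorial
            * ((a + (n + i)).choose ((n + i) - n)))
        = (((n' + a).factorial : ℝ) / (n.factorial * (n' - n).factorial))
          * ((((-1 : ℤ) ^ i * ((n' - n).choose i) : ℤ)) : ℝ) := by
      intro i hi
      have hi' : i ≤ n' - n := by simpa [Nat.lt_succ_iff] using hi
      have c1 : (((n' - n).choose i : ℤ) : ℝ)
          = ((n' - n).factorial : ℝ) / (i.factorial * (n' - n - i).factorial) := by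
        push_cast
        exact Nat.cast_choose ℝ hi'
      have c2 : ((a + (n + i)).choose ((n + i) - n) : ℝ)
          = ((a + (n + i)).factorial : ℝ) / (i.factorial * ((a + n)).factorial) := by
        rw [show (n + i) - n = i from by omega,
          Nat.cast_choose ℝ (by omega : i ≤ a + (n + i)),
          show a + (n + i) - i = a + n from by omega]
      have e3 : n' - (n + i) = n' - n - i := by omega
      have e4 : ((n + a).factorial : ℝ) = ((a + n).factorial : ℝ) := by rw [add_comm]
      rw [c2, e3, e4]
      push_cast [c1]
      have f1 : ((n + i).factorial : ℝ) ≠ 0 := by positivity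
      have f2 : ((n' - n - i).factorial : ℝ) ≠ 0 := by positivity
      have f3 : ((a + (n + i)).factorial : ℝ) ≠ 0 := by positivity
      have f4 : (n.factorial : ℝ) ≠ 0 := by positivity
      have f5 : (i.factorial : ℝ) ≠ 0 := by positivity
      have f6 : ((a + n).factorial : ℝ) ≠ 0 := by positivity
      have f7 : ((n' - n).factorial : ℝ) ≠ 0 := by positivity
      field_simp
      ring_nf
      rw [show (-1 : ℝ) ^ (n * 2) = 1 from by rw [show n * 2 = 2 * n from by ring, pow_mul]; norm_num]
      ring
    rw [Finset.sum_congr rfl key, ← Finset.mul_sum, ← Int.cast_sum,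
      Int.alternating_sum_range_choose]
    by_cases h : n = n'
    · rw [if_pos (by omega : n' - n = 0), if_pos h]
      subst h
      simp
    · rw [if_neg (by omega : ¬ n' - n = 0), if_neg h]
      simp
  · rw [show n' + 1 - n = 0 from by omega]
    rw [if_neg (by omega : ¬ n = n')]
    simp

lemma angular (k : ℤ) : ∫ θ in Set.Ioo (-Real.pi) Real.pi, Complex.exp (k * θ * Complex.I)
    = if k = 0 then ((2 * Real.pi : ℝ) : ℂ) else 0 := by
  have hle : -Real.pi ≤ Real.pi := by linarith [Real.pi_pos]
  rw [← integral_Ioc_eq_integral_Ioo, ← intervalIntegral.integral_of_le hle]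
  by_cases hk : k = 0
  · subst hk
    simp only [Int.cast_zero, zero_mul, Complex.exp_zero, if_pos]
    rw [intervalIntegral.integral_const]
    push_cast
    ring_nf
    norm_num
  · rw [if_neg hk]
    have h1 : ∀ θ : ℝ, (k : ℂ) * θ * Complex.I = ((k : ℂ) * Complex.I) * θ := fun θ => by ring
    simp_rw [h1]
    rw [integral_exp_mul_complex (by simp [hk] : (k : ℂ) * Complex.I ≠ 0)]
    have hs : Complex.sin ((k : ℂ) * Real.pi) = 0 := Complex.sin_int_mul_pi k
    have h2 : (k : ℂ) * Complex.I * Real.pi = ((k : ℂ) * Real.pi) * Complex.I := by ring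
    have h3 : (k : ℂ) * Complex.I * (-Real.pi : ℝ) = (-((k : ℂ) * Real.pi)) * Complex.I := by
      push_cast; ring
    rw [h2, h3, Complex.exp_mul_I, Complex.exp_mul_I, Complex.cos_neg, Complex.sin_neg, hs]
    simp

lemma fmn_polar (m : ℤ) (n : ℕ) (r θ : ℝ) (hr : 0 < r) :
    fmn m n (Complex.polarCoord.symm (r, θ))
    = ((Real.sqrt ((Nat.factorial n : ℝ) / (Real.pi * (Nat.factorial (n + m.natAbs) : ℝ)))
        * Real.exp (-r ^ 2 / 2) * r ^ m.natAbs * laguerre (m.natAbs : ℝ) n (r ^ 2) : ℝ) : ℂ)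
      * Complex.exp ((m : ℂ) * θ * Complex.I) := by
  have hz : Complex.polarCoord.symm (r, θ) = (r : ℂ) * Complex.exp (θ * Complex.I) := by
    rw [Complex.polarCoord_symm_apply, Complex.exp_mul_I, ← Complex.ofReal_cos,
      ← Complex.ofReal_sin]
  have habs : ‖(r : ℂ) * Complex.exp (θ * Complex.I)‖ = r := by
    rw [norm_mul, Complex.norm_exp_ofReal_mul_I, Complex.norm_real, Real.norm_of_nonneg hr.le, mul_one]
  rw [fmn, hz, habs]
  rcases le_or_gt 0 m with hm | hm
  · rw [if_pos hm]
    have hpow : ((r : ℂ) * Complex.exp (θ * Complex.I)) ^ m.natAbs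
        = (r : ℂ) ^ m.natAbs * Complex.exp ((m.natAbs : ℂ) * (θ * Complex.I)) := by
      rw [mul_pow, ← Complex.exp_nat_mul]
    rw [hpow]
    have hc : ((m.natAbs : ℂ)) = (m : ℂ) := by
      have := Int.natAbs_of_nonneg hm
      calc ((m.natAbs : ℂ)) = ((m.natAbs : ℤ) : ℂ) := (Int.cast_natCast _).symm
        _ = (m : ℂ) := by rw [this]
    rw [hc]
    push_cast
    ring
  · rw [if_neg (not_le.mpr hm)]
    have hconj : (starRingEnd ℂ) ((r : ℂ) * Complex.exp (θ * Complex.I))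
        = (r : ℂ) * Complex.exp (-(θ * Complex.I)) := by
      rw [map_mul, Complex.conj_ofReal, ← Complex.exp_conj, map_mul, Complex.conj_ofReal,
        Complex.conj_I, mul_neg]
    have hpow : ((r : ℂ) * Complex.exp (-(θ * Complex.I))) ^ m.natAbs
        = (r : ℂ) ^ m.natAbs * Complex.exp ((m.natAbs : ℂ) * (-(θ * Complex.I))) := by
      rw [mul_pow, ← Complex.exp_nat_mul]
    rw [hconj, hpow]
    have hc : ((m.natAbs : ℂ)) = -(m : ℂ) := by
      have := Int.ofNat_natAbs_of_nonpos hm.le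
      calc ((m.natAbs : ℂ)) = ((m.natAbs : ℤ) : ℂ) := (Int.cast_natCast _).symm
        _ = -(m : ℂ) := by rw [this]; push_cast; ring
    rw [hc]
    push_cast
    ring_nf

theorem fmn_orthonormal (m m' : ℤ) (n n' : ℕ) :
    ∫ z : ℂ, (starRingEnd ℂ) (fmn m n z) * fmn m' n' z =
      if m = m' ∧ n = n' then 1 else 0 := by
  classical
  set a : ℕ := m.natAbs with ha
  set a' : ℕ := m'.natAbs with ha'
  set c : ℝ := Real.sqrt ((Nat.factorial n : ℝ) / (Real.pi * (Nat.factorial (n + a) : ℝ)))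
    with hc
  set c' : ℝ := Real.sqrt ((Nat.factorial n' : ℝ) / (Real.pi * (Nat.factorial (n' + a') : ℝ)))
    with hc'
  rw [← Complex.integral_comp_polarCoord_symm
    (fun z => (starRingEnd ℂ) (fmn m n z) * fmn m' n' z)]
  have hGH : Set.EqOn
      (fun p : ℝ × ℝ => p.1 • ((starRingEnd ℂ) (fmn m n (Complex.polarCoord.symm p)) *
        fmn m' n' (Complex.polarCoord.symm p)))
      (fun p : ℝ × ℝ =>
        (fun r : ℝ => (((c * Real.exp (-r ^ 2 / 2) * r ^ a * laguerre a n (r ^ 2)) *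
          (c' * Real.exp (-r ^ 2 / 2) * r ^ a' * laguerre a' n' (r ^ 2)) * r : ℝ) : ℂ)) p.1 *
        (fun θ : ℝ => Complex.exp (((m' - m : ℤ) : ℂ) * θ * Complex.I)) p.2)
      polarCoord.target := by
    rintro ⟨r, θ⟩ hp
    have hr : 0 < r := hp.1
    simp only
    rw [fmn_polar m n r θ hr, fmn_polar m' n' r θ hr]
    rw [map_mul, Complex.conj_ofReal, ← Complex.exp_conj, map_mul, map_mul, Complex.conj_I,
      map_intCast, Complex.conj_ofReal, mul_neg]
    rw [show ((m' - m : ℤ) : ℂ) * θ * Complex.I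
        = (m' : ℂ) * θ * Complex.I + -((m : ℂ) * θ * Complex.I) by push_cast; ring,
      Complex.exp_add]
    rw [Complex.real_smul]
    push_cast
    ring
  rw [setIntegral_congr_fun polarCoord.open_target.measurableSet hGH,
    show polarCoord.target = Set.Ioi (0 : ℝ) ×ˢ Set.Ioo (-Real.pi) Real.pi from rfl,
    Measure.volume_eq_prod,
    setIntegral_prod_mul
      (fun r : ℝ => (((c * Real.exp (-r ^ 2 / 2) * r ^ a * laguerre a n (r ^ 2)) *
        (c' * Real.exp (-r ^ 2 / 2) * r ^ a' * laguerre a' n' (r ^ 2)) * r : ℝ) : ℂ))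
      (fun θ : ℝ => Complex.exp (((m' - m : ℤ) : ℂ) * θ * Complex.I))
      (Set.Ioi (0 : ℝ)) (Set.Ioo (-Real.pi) Real.pi),
    angular (m' - m)]
  by_cases hm : m = m'
  · subst hm
    rw [sub_self, if_pos rfl]
    have haa : a' = a := rfl
    rw [show (∫ x in Set.Ioi (0 : ℝ),
        (((c * Real.exp (-x ^ 2 / 2) * x ^ a * laguerre a n (x ^ 2)) *
          (c' * Real.exp (-x ^ 2 / 2) * x ^ a' * laguerre a' n' (x ^ 2)) * x : ℝ) : ℂ))
        = (((∫ x in Set.Ioi (0 : ℝ),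
          (c * Real.exp (-x ^ 2 / 2) * x ^ a * laguerre a n (x ^ 2)) *
          (c' * Real.exp (-x ^ 2 / 2) * x ^ a' * laguerre a' n' (x ^ 2)) * x) : ℝ) : ℂ)
      from integral_ofReal]
    have hrad : (∫ r in Set.Ioi (0 : ℝ),
        (c * Real.exp (-r ^ 2 / 2) * r ^ a * laguerre a n (r ^ 2)) *
          (c' * Real.exp (-r ^ 2 / 2) * r ^ a' * laguerre a' n' (r ^ 2)) * r)
        = c * c' * (1 / 2) * (if n = n' then ((n + a).factorial : ℝ) / n.factorial else 0) := by
      have h2 : Set.EqOn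
          (fun r : ℝ => (c * Real.exp (-r ^ 2 / 2) * r ^ a * laguerre a n (r ^ 2)) *
            (c' * Real.exp (-r ^ 2 / 2) * r ^ a' * laguerre a' n' (r ^ 2)) * r)
          (fun r : ℝ => (1 / 2 : ℝ) • ((|(((2 : ℕ)) : ℝ)| * r ^ ((((2 : ℕ)) : ℝ) - 1)) •
            (fun t : ℝ => c * c' * (t ^ a * Real.exp (-t) *
              (laguerre a n t * laguerre a n' t))) (r ^ (((2 : ℕ)) : ℝ))))
          (Set.Ioi 0) := by
        intro r hr
        have h0 : (0 : ℝ) ≤ r := le_of_lt hr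
        simp only [smul_eq_mul, haa]
        rw [show ((((2 : ℕ)) : ℝ) - 1) = 1 by norm_num, Real.rpow_one, Real.rpow_natCast,
          show |(((2 : ℕ)) : ℝ)| = 2 by norm_num]
        rw [show Real.exp (-(r ^ (2 : ℕ))) = Real.exp (-r ^ 2 / 2) * Real.exp (-r ^ 2 / 2) by
          rw [← Real.exp_add]; ring_nf]
        rw [show ((r ^ (2 : ℕ)) ^ a : ℝ) = r ^ a * r ^ a by rw [← pow_mul, ← pow_add]; ring_nf]
        ring
      rw [setIntegral_congr_fun measurableSet_Ioi h2, integral_smul,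
        MeasureTheory.integral_comp_rpow_Ioi
          (fun t : ℝ => c * c' * (t ^ a * Real.exp (-t) * (laguerre a n t * laguerre a n' t)))
          (by norm_num : ((((2 : ℕ)) : ℝ)) ≠ 0), integral_const_mul,
        laguerre_ortho a n n']
      rw [smul_eq_mul]
      ring
    rw [hrad]
    by_cases hn : n = n'
    · subst hn
      rw [if_pos rfl, if_pos ⟨rfl, rfl⟩, ← Complex.ofReal_mul]
      have hc2 : c * c' = (Nat.factorial n : ℝ) / (Real.pi * (Nat.factorial (n + a) : ℝ)) :=
        Real.mul_self_sqrt (by positivity)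
      rw [show (c * c' * (1 / 2) * (((n + a).factorial : ℝ) / n.factorial)) * (2 * Real.pi)
          = 1 by
        have h1 : (Real.pi : ℝ) ≠ 0 := Real.pi_ne_zero
        have h2 : ((n + a).factorial : ℝ) ≠ 0 := by positivity
        have h3 : ((n).factorial : ℝ) ≠ 0 := by positivity
        rw [hc2]
        field_simp]
      exact Complex.ofReal_one
    · rw [if_neg hn, if_neg (fun h => hn h.2)]
      simp
  · rw [if_neg (sub_ne_zero_of_ne fun h => hm h.symm), if_neg (fun h => hm h.1)]
    simp
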